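/- Define the projection Pr : Mat₄(ℝ) → se(3) by Pr(A) = (1/2)·diag(1,1,1,0)·(A·diag(1,1,1,2) − Aᵀ·diag(1,1,1,0)). Then for every A ∈ Mat₄(ℝ), Pr(A) lies in se(3) (its upper-left 3×3 block is skew-symmetric and its last row is zero), and Pr is the orthogonal projection onto se(3) with respect to the Frobenius inner product: for every η ∈ se(3), trace(ηᵀ A) = trace(ηᵀ Pr(A)). Moreover Pr restricted to se(3) is the identity. -/

import Mathlib

open Matrix

/-- Membership in `𝔰𝔢(3)`. -/
def isSe3 (A : Matrix (Fin 4) (Fin 4) ℝ) : Prop :=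
  (∀ i j : Fin 3, A i.castSucc j.castSucc = - A j.castSucc i.castSucc) ∧
  (∀ j : Fin 4, A 3 j = 0)

/-- The projection `Pr : Mat₄(ℝ) → 𝔰𝔢(3)`,
`Pr(A) = (1/2)·diag(1,1,1,0)·(A·diag(1,1,1,2) − Aᵀ·diag(1,1,1,0))`. -/
noncomputable def prSe (A : Matrix (Fin 4) (Fin 4) ℝ) : Matrix (Fin 4) (Fin 4) ℝ :=
  (1 / 2 : ℝ) • (Matrix.diagonal ![1, 1, 1, 0] *
    (A * Matrix.diagonal ![1, 1, 1, 2] - Aᵀ * Matrix.diagonal ![1, 1, 1, 0]))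

lemma prSe_apply (A : Matrix (Fin 4) (Fin 4) ℝ) (i j : Fin 4) :
    prSe A i j = (1/2 : ℝ) * (![1,1,1,0] i) *
      (A i j * ![1,1,1,2] j - A j i * ![1,1,1,0] j) := by
  simp [prSe, Matrix.mul_apply, Matrix.diagonal, Fin.sum_univ_four, Matrix.sub_apply]
  fin_cases i <;> fin_cases j <;> simp

/-- `Pr` maps into `𝔰𝔢(3)`, is the Frobenius-orthogonal projection onto `𝔰𝔢(3)`
(i.e. `trace(ηᵀA) = trace(ηᵀ Pr A)` for all `η ∈ 𝔰𝔢(3)`), and restricts to the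
identity on `𝔰𝔢(3)`. -/
theorem stmt4 :
    (∀ A : Matrix (Fin 4) (Fin 4) ℝ, isSe3 (prSe A)) ∧
    (∀ (A η : Matrix (Fin 4) (Fin 4) ℝ), isSe3 η →
      Matrix.trace (ηᵀ * A) = Matrix.trace (ηᵀ * prSe A)) ∧
    (∀ A : Matrix (Fin 4) (Fin 4) ℝ, isSe3 A → prSe A = A) := by
  refine ⟨?_, ?_, ?_⟩
  · intro A
    constructor
    · intro i j
      fin_cases i <;> fin_cases j <;>
        simp [prSe_apply, Fin.castSucc, Fin.castAdd, Fin.castLE] <;> ring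
    · intro j
      simp [prSe_apply]
  · intro A η ⟨hskew, hrow⟩
    have h00 : η 0 0 = -η 0 0 := hskew 0 0
    have h01 : η 0 1 = -η 1 0 := hskew 0 1
    have h02 : η 0 2 = -η 2 0 := hskew 0 2
    have h11 : η 1 1 = -η 1 1 := hskew 1 1
    have h12 : η 1 2 = -η 2 1 := hskew 1 2
    have h22 : η 2 2 = -η 2 2 := hskew 2 2
    have r0 := hrow 0; have r1 := hrow 1; have r2 := hrow 2; have r3 := hrow 3
    simp only [Matrix.trace, Matrix.diag, Matrix.mul_apply, Matrix.transpose_apply,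
      Fin.sum_univ_four, prSe_apply]
    norm_num [r0, r1, r2, r3, Matrix.cons_val_two, Matrix.cons_val_three, Matrix.vecHead, Matrix.vecTail]
    linear_combination (1/2)*A 0 0*h00 + (1/2)*(A 0 1 + A 1 0)*h01 +
      (1/2)*(A 0 2 + A 2 0)*h02 + (1/2)*A 1 1*h11 +
      (1/2)*(A 1 2 + A 2 1)*h12 + (1/2)*A 2 2*h22
  · intro A ⟨hskew, hrow⟩
    have h00 : A 0 0 = -A 0 0 := hskew 0 0
    have h01 : A 0 1 = -A 1 0 := hskew 0 1
    have h02 : A 0 2 = -A 2 0 := hskew 0 2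
    have h11 : A 1 1 = -A 1 1 := hskew 1 1
    have h12 : A 1 2 = -A 2 1 := hskew 1 2
    have h22 : A 2 2 = -A 2 2 := hskew 2 2
    ext i j
    fin_cases i <;> fin_cases j <;>
      simp [prSe_apply, hrow] <;> linarith
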